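/- Let R > 0, f : [−1,1]² → ℝ continuous, and define J(p) = z₁ + Rz₂, H_f(p) = x₁x₂ + y₁y₂ + z₁z₂ − f(z₁,z₂) on S²×S², Φ = (J, H_f), and ψ(x₁,y₁,z₁,x₂,y₂,z₂) = (−x₁,y₁,−z₁,x₂,−y₂,−z₂). Define F(z) = −(f(−Rz,z) + f(Rz,−z) + 2Rz²)/2 for z ∈ [−1,1], with maximum M_{R,f} and minimum m_{R,f} over the set of z ∈ [−1,1] with |Rz| ≤ 1. If (a,b) ∉ {0} × [m_{R,f}, M_{R,f}], then ψ(Φ⁻¹(a,b)) ∩ Φ⁻¹(a,b) = ∅. -/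
import Mathlib


/-- The unit sphere S² ⊂ ℝ³, points written (x, y, z). -/
def sphere2 : Set (ℝ × ℝ × ℝ) := {v | v.1 ^ 2 + v.2.1 ^ 2 + v.2.2 ^ 2 = 1}

/-- The involution ψ(x₁,y₁,z₁,x₂,y₂,z₂) = (−x₁,y₁,−z₁,x₂,−y₂,−z₂). -/
def psiMap : (ℝ × ℝ × ℝ) × (ℝ × ℝ × ℝ) → (ℝ × ℝ × ℝ) × (ℝ × ℝ × ℝ) :=
  fun p => ((-p.1.1, p.1.2.1, -p.1.2.2), (p.2.1, -p.2.2.1, -p.2.2.2))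

/-- J(p) = z₁ + R z₂. -/
def Jmap (R : ℝ) (p : (ℝ × ℝ × ℝ) × (ℝ × ℝ × ℝ)) : ℝ := p.1.2.2 + R * p.2.2.2

/-- H_f(p) = x₁x₂ + y₁y₂ + z₁z₂ − f(z₁, z₂). -/
def Hmap (f : ℝ → ℝ → ℝ) (p : (ℝ × ℝ × ℝ) × (ℝ × ℝ × ℝ)) : ℝ :=
  p.1.1 * p.2.1 + p.1.2.1 * p.2.2.1 + p.1.2.2 * p.2.2.2 - f p.1.2.2 p.2.2.2

/-- F_{R,f}(z) = −(f(−Rz, z) + f(Rz, −z) + 2Rz²)/2. -/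
noncomputable def Fmap (R : ℝ) (f : ℝ → ℝ → ℝ) (z : ℝ) : ℝ :=
  -(f (-R * z) z + f (R * z) (-z) + 2 * R * z ^ 2) / 2

/-- If (a,b) ∉ {0} × [m_{R,f}, M_{R,f}], then ψ displaces the fiber Φ_{R,f}⁻¹(a,b) from itself. -/
theorem stmt_15 (R : ℝ) (hR : 0 < R) (f : ℝ → ℝ → ℝ)
    (hf : Continuous fun q : ℝ × ℝ => f q.1 q.2) (a b : ℝ)
    (hab : ¬ (a = 0 ∧
      sInf (Fmap R f '' {z ∈ Set.Icc (-1 : ℝ) 1 | |R * z| ≤ 1}) ≤ b ∧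
      b ≤ sSup (Fmap R f '' {z ∈ Set.Icc (-1 : ℝ) 1 | |R * z| ≤ 1}))) :
    ∀ p ∈ {q ∈ sphere2 ×ˢ sphere2 | Jmap R q = a ∧ Hmap f q = b},
      psiMap p ∉ {q ∈ sphere2 ×ˢ sphere2 | Jmap R q = a ∧ Hmap f q = b} := by
  rintro ⟨⟨x1, y1, z1⟩, x2, y2, z2⟩ ⟨⟨hs1, hs2⟩, hJ, hH⟩ ⟨⟨hs1', hs2'⟩, hJ', hH'⟩
  apply hab
  simp only [sphere2, psiMap, Jmap, Hmap, Set.mem_setOf_eq] at *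
  have ha : a = 0 := by linarith
  have hz1 : z1 = -R * z2 := by linarith
  have hb : b = Fmap R f z2 := by
    have e1 : f (-z1) (-z2) = f (R * z2) (-z2) := by rw [hz1]; ring_nf
    have e2 : f z1 z2 = f (-R * z2) z2 := by rw [hz1]
    unfold Fmap
    rw [← e1, ← e2]
    have hz12 : z1 * z2 = -R * z2 ^ 2 := by rw [hz1]; ring
    nlinarith [hH, hH']
  have hmem : b ∈ Fmap R f '' {z ∈ Set.Icc (-1 : ℝ) 1 | |R * z| ≤ 1} := by
    refine ⟨z2, ⟨⟨?_, ?_⟩, ?_⟩, hb.symm⟩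
    · nlinarith [sq_nonneg x2, sq_nonneg y2, sq_nonneg (z2 + 1)]
    · nlinarith [sq_nonneg x2, sq_nonneg y2, sq_nonneg (z2 - 1)]
    · rw [abs_le]
      constructor
      · nlinarith [sq_nonneg x1, sq_nonneg y1, sq_nonneg (z1 - 1)]
      · nlinarith [sq_nonneg x1, sq_nonneg y1, sq_nonneg (z1 + 1)]
  have hK : IsCompact {z ∈ Set.Icc (-1 : ℝ) 1 | |R * z| ≤ 1} := by
    apply isCompact_Icc.inter_right
    exact isClosed_le (continuous_abs.comp (continuous_const.mul continuous_id))
      continuous_const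
  have h1 : Continuous fun z : ℝ => f (-R * z) z :=
    hf.comp ((continuous_const.mul continuous_id).prodMk continuous_id)
  have h2 : Continuous fun z : ℝ => f (R * z) (-z) :=
    hf.comp ((continuous_const.mul continuous_id).prodMk continuous_neg)
  have hc : Continuous (Fmap R f) := by
    unfold Fmap
    exact (((h1.add h2).add (continuous_const.mul (continuous_pow 2))).neg).div_const 2
  have hKc := hK.image hc
  exact ⟨ha, csInf_le hKc.bddBelow hmem, le_csSup hKc.bddAbove hmem⟩
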